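/- There exist a sequence of finite games (Gₙ)_{n∈ℕ} with connecting game embeddings eₙ : Gₙ → G_{n+1} that is a Fraïssé sequence for the class of finite games, together with game embeddings fₙ : Gₙ → G_FL satisfying f_{n+1} ∘ eₙ = fₙ for all n, ⋃ₙ fₙ[Tₙ] = ω^{<ω}, and ⋃ₙ f̄ₙ[Aₙ] = c₀₀ (where Gₙ = (Tₙ, Aₙ)); in particular (fₙ) is a colimit cocone of the sequence in Games_A, so G_FL is the Fraïssé limit of the class of finite games with game embeddings. -/

import Mathlib

universe u v w x y

namespace FraisseGames

/-- The initial segment (of length `n`) of an infinite sequence `R`. -/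
def runPrefix {M : Type u} (R : ℕ → M) (n : ℕ) : List M :=
  (List.range n).map R

/-- `T` is a game tree over `M`: it is closed under initial segments, and every
moment of `T` has a one-step extension in `T`. -/
def IsGameTree {M : Type u} (T : Set (List M)) : Prop :=
  (∀ t ∈ T, ∀ k : ℕ, t.take k ∈ T) ∧ ∀ t ∈ T, ∃ x : M, t ++ [x] ∈ T

/-- The set of runs of the tree `T`. -/
def Runs {M : Type u} (T : Set (List M)) : Set (ℕ → M) :=
  {R | ∀ n : ℕ, runPrefix R n ∈ T}

/-- A game over `M`: a game tree together with a payoff set of runs. -/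
structure Game (M : Type u) : Type u where
  tree : Set (List M)
  isGameTree : IsGameTree tree
  payoff : Set (ℕ → M)
  payoff_subset : payoff ⊆ Runs tree

/-- A game is finite if its set of runs is finite. -/
def Game.IsFin {M : Type u} (G : Game M) : Prop := (Runs G.tree).Finite

/-- The subgame relation `G ≤ G'`. -/
def Game.Sub {M : Type u} (G G' : Game M) : Prop :=
  G.tree ⊆ G'.tree ∧ G.payoff = G'.payoff ∩ Runs G.tree

/-- `f` is a chronological map from `T₁` to `T₂`: it maps `T₁` into `T₂` and it
preserves lengths and truncations of moments. -/
def Chronological {M₁ : Type u} {M₂ : Type v} (T₁ : Set (List M₁)) (T₂ : Set (List M₂))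
    (f : List M₁ → List M₂) : Prop :=
  (∀ t ∈ T₁, f t ∈ T₂) ∧ (∀ t ∈ T₁, (f t).length = t.length) ∧
    ∀ t ∈ T₁, ∀ k : ℕ, f (t.take k) = (f t).take k

/-- `BarMapsTo f R S` says that the map `f̄` on runs induced by the chronological
map `f` sends the run `R` to the run `S`, i.e. `S↾n = f (R↾n)` for all `n`. -/
def BarMapsTo {M₁ : Type u} {M₂ : Type v} (f : List M₁ → List M₂)
    (R : ℕ → M₁) (S : ℕ → M₂) : Prop :=
  ∀ n : ℕ, runPrefix S n = f (runPrefix R n)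

/-- `f` is an A-morphism from `G₁` to `G₂`: a chronological map whose induced map on
runs sends runs won by Ali to runs won by Ali. -/
def IsAMorphism {M₁ : Type u} {M₂ : Type v} (G₁ : Game M₁) (G₂ : Game M₂)
    (f : List M₁ → List M₂) : Prop :=
  Chronological G₁.tree G₂.tree f ∧
    ∀ R ∈ G₁.payoff, ∀ S : ℕ → M₂, BarMapsTo f R S → S ∈ G₂.payoff

/-- `f` is a game embedding from `G₁` to `G₂`: a chronological map, injective on the
tree, such that for every run `R` of `G₁`, `R ∈ A₁ ↔ f̄ R ∈ A₂`. -/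
def IsGameEmbedding {M₁ : Type u} {M₂ : Type v} (G₁ : Game M₁) (G₂ : Game M₂)
    (f : List M₁ → List M₂) : Prop :=
  Chronological G₁.tree G₂.tree f ∧
    (∀ t ∈ G₁.tree, ∀ s ∈ G₁.tree, f t = f s → t = s) ∧
    ∀ R ∈ Runs G₁.tree, ∀ S : ℕ → M₂, BarMapsTo f R S → (R ∈ G₁.payoff ↔ S ∈ G₂.payoff)

/-- `f` is an isomorphism of games from `G₁` onto `G₂`: a game embedding that is
surjective onto the tree of `G₂`. -/
def IsGameIso {M₁ : Type u} {M₂ : Type v} (G₁ : Game M₁) (G₂ : Game M₂)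
    (f : List M₁ → List M₂) : Prop :=
  IsGameEmbedding G₁ G₂ f ∧ ∀ s ∈ G₂.tree, ∃ t ∈ G₁.tree, f t = s

/-- The set of eventually-zero infinite sequences of natural numbers. -/
def c00 : Set (ℕ → ℕ) := {R | ∃ N : ℕ, ∀ n ≥ N, R n = 0}

/-- The game `G_FL = (ω^{<ω}, c₀₀)`. -/
def GFL : Game ℕ where
  tree := Set.univ
  isGameTree := ⟨fun _ _ _ => trivial, fun _ _ => ⟨0, trivial⟩⟩
  payoff := c00
  payoff_subset := fun _ _ _ => trivial

/-- The universal property of a colimit cocone in the category `Games_A` of games and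
A-morphisms: every cocone of A-morphisms over the sequence factors through `q`
via a unique (up to agreement on the tree) A-morphism.  (Morphisms of `Games_A` are
identified when they agree on the game tree.) -/
def IsGamesACoconeColimit.{u', v', w'} {MS : ℕ → Type u'} (S : ∀ n, Game (MS n))
    (s : ∀ n, List (MS n) → List (MS (n + 1)))
    {N : Type v'} (L : Game N) (q : ∀ n, List (MS n) → List N) : Prop :=
  ∀ (P : Type w') (H : Game P) (h : ∀ n, List (MS n) → List P),
    (∀ n, IsAMorphism (S n) H (h n)) →
    (∀ n, ∀ t ∈ (S n).tree, h (n + 1) (s n t) = h n t) →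
    ∃ k : List N → List P, IsAMorphism L H k ∧
      (∀ n, ∀ t ∈ (S n).tree, k (q n t) = h n t) ∧
      ∀ k' : List N → List P, IsAMorphism L H k' →
        (∀ n, ∀ t ∈ (S n).tree, k' (q n t) = h n t) →
        ∀ t ∈ L.tree, k' t = k t

/-- `iterComp e n m` is the composite `e_{n,m} = e_{m-1} ∘ ⋯ ∘ eₙ` of the connecting
maps of a sequence (equal to the identity when `m ≤ n`). -/
def iterComp {α : Type u} (e : ℕ → α → α) (n : ℕ) : ℕ → α → α
  | 0 => id
  | m + 1 => if n ≤ m then e m ∘ iterComp e n m else id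


section Basics

variable {M : Type u} {M₁ : Type u} {M₂ : Type v}

@[simp] lemma runPrefix_length (R : ℕ → M) (n : ℕ) : (runPrefix R n).length = n := by
  simp [runPrefix]

@[simp] lemma runPrefix_zero (R : ℕ → M) : runPrefix R 0 = [] := by simp [runPrefix]

lemma runPrefix_getElem (R : ℕ → M) {n i : ℕ} (h : i < (runPrefix R n).length) :
    (runPrefix R n)[i] = R i := by
  simp [runPrefix]

lemma runPrefix_take (R : ℕ → M) (n k : ℕ) :
    (runPrefix R n).take k = runPrefix R (min k n) := by
  apply List.ext_getElem <;> simp [runPrefix]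

lemma runPrefix_eq_iff {R S : ℕ → M} {n : ℕ} :
    runPrefix R n = runPrefix S n ↔ ∀ i < n, R i = S i := by
  constructor
  · intro h i hi
    have h1 : i < (runPrefix R n).length := by simpa using hi
    have h2 : i < (runPrefix S n).length := by simpa using hi
    calc R i = (runPrefix R n)[i] := (runPrefix_getElem _ h1).symm
      _ = (runPrefix S n)[i] := List.getElem_of_eq h h1
      _ = S i := runPrefix_getElem _ h2
  · intro h
    apply List.ext_getElem (by simp)
    intro i h1 h2
    rw [runPrefix_getElem, runPrefix_getElem]
    exact h i (by simpa using h1)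

lemma eq_runPrefix_of_length {t : List M} (d : M) :
    t = runPrefix (fun i => t.getD i d) t.length := by
  apply List.ext_getElem (by simp)
  intro i h1 h2
  rw [runPrefix_getElem]
  simp [List.getD_eq_getElem?_getD, h1]

lemma barMapsTo_id {R S : ℕ → M} (h : BarMapsTo id R S) : S = R := by
  funext i
  have := (runPrefix_eq_iff).mp (h (i+1))
  exact this i (Nat.lt_succ_self i)

lemma barMapsTo_id_self (R : ℕ → M) : BarMapsTo id R R := fun _ => rfl

lemma barMapsTo_unique {f : List M₁ → List M₂} {R : ℕ → M₁} {S S' : ℕ → M₂}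
    (h : BarMapsTo f R S) (h' : BarMapsTo f R S') : S = S' := by
  funext i
  have : runPrefix S (i+1) = runPrefix S' (i+1) := by rw [h, h']
  exact runPrefix_eq_iff.mp this i (Nat.lt_succ_self i)

lemma barMapsTo_apply {f : List M₁ → List M₂} {R : ℕ → M₁} {S : ℕ → M₂}
    (h : BarMapsTo f R S) (i : ℕ) (d : M₂) : S i = (f (runPrefix R (i+1))).getD i d := by
  have h1 := h (i+1)
  have : (runPrefix S (i+1)).getD i d = S i := by
    have hi : i < (runPrefix S (i+1)).length := by simp
    rw [List.getD_eq_getElem?_getD, List.getElem?_eq_getElem hi]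
    simp [runPrefix_getElem]
  rw [← this, h1]

lemma chrono_length {T₁ : Set (List M₁)} {T₂ : Set (List M₂)} {f : List M₁ → List M₂}
    (hf : Chronological T₁ T₂ f) {R : ℕ → M₁} (hR : R ∈ Runs T₁) (n : ℕ) :
    (f (runPrefix R n)).length = n := by
  rw [hf.2.1 _ (hR n)]; simp

lemma chrono_getElem {T₁ : Set (List M₁)} {T₂ : Set (List M₂)} {f : List M₁ → List M₂}
    (hf : Chronological T₁ T₂ f) {R : ℕ → M₁} (hR : R ∈ Runs T₁) {i n : ℕ} (hin : i < n)
    (h1 : i < (f (runPrefix R (i+1))).length) (h2 : i < (f (runPrefix R n)).length) :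
    (f (runPrefix R (i+1)))[i] = (f (runPrefix R n))[i] := by
  have htake : f (runPrefix R (i+1)) = (f (runPrefix R n)).take (i+1) := by
    have hm : min (i+1) n = i + 1 := by omega
    rw [← hf.2.2 _ (hR n) (i+1), runPrefix_take, hm]
  rw [List.getElem_of_eq htake h1, List.getElem_take]

/-- the induced map on runs exists for chronological maps. -/
lemma bar_exists {T₁ : Set (List M₁)} {T₂ : Set (List M₂)} {f : List M₁ → List M₂}
    (hf : Chronological T₁ T₂ f) {R : ℕ → M₁} (hR : R ∈ Runs T₁) :
    ∃ S : ℕ → M₂, BarMapsTo f R S ∧ S ∈ Runs T₂ := by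
  have hlen : ∀ i : ℕ, i < (f (runPrefix R (i+1))).length := fun i => by
    rw [chrono_length hf hR]; omega
  refine ⟨fun i => (f (runPrefix R (i+1)))[i]'(hlen i), ?_, ?_⟩
  · intro n
    apply List.ext_getElem (by simp [chrono_length hf hR])
    intro i h1 h2
    rw [runPrefix_getElem]
    exact chrono_getElem hf hR (by simpa using h1) (hlen i) h2
  · intro n
    have h1 : runPrefix (fun i => (f (runPrefix R (i+1)))[i]'(hlen i)) n = f (runPrefix R n) := by
      apply List.ext_getElem (by simp [chrono_length hf hR])
      intro i h1 h2
      rw [runPrefix_getElem]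
      exact chrono_getElem hf hR (by simpa using h1) (hlen i) h2
    rw [h1]
    exact hf.1 _ (hR n)

end Basics
section TnSect

/-- The tree of the `n`-th game in the sequence. -/
def Tn (n : ℕ) : Set (List ℕ) :=
  {t | ∀ i, (hi : i < t.length) → (i < n → t[i] ≤ n) ∧ (n ≤ i → t[i] ≤ 1) ∧
    (n ≤ i → ∀ (hn : n < t.length), t[i] = t[n])}

lemma runPrefix_mem_Tn {R : ℕ → ℕ} {k n : ℕ} :
    runPrefix R k ∈ Tn n ↔ ∀ i < k, (i < n → R i ≤ n) ∧ (n ≤ i → R i ≤ 1) ∧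
      (n ≤ i → n < k → R i = R n) := by
  constructor
  · intro h i hik
    have hi : i < (runPrefix R k).length := by simpa using hik
    have := h i hi
    rw [runPrefix_getElem _ hi] at this
    refine ⟨this.1, this.2.1, fun h1 h2 => ?_⟩
    have hn : n < (runPrefix R k).length := by simpa using h2
    have := (h i hi).2.2 h1 hn
    rw [runPrefix_getElem _ hi, runPrefix_getElem _ hn] at this
    exact this
  · intro h i hi
    have hik : i < k := by simpa using hi
    rw [runPrefix_getElem _ hi]
    refine ⟨(h i hik).1, (h i hik).2.1, fun h1 hn => ?_⟩
    rw [runPrefix_getElem _ hn]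
    exact (h i hik).2.2 h1 (by simpa using hn)

lemma mem_runs_Tn {R : ℕ → ℕ} {n : ℕ} :
    R ∈ Runs (Tn n) ↔ (∀ i < n, R i ≤ n) ∧ R n ≤ 1 ∧ ∀ i, n ≤ i → R i = R n := by
  constructor
  · intro h
    refine ⟨fun i hi => (runPrefix_mem_Tn.mp (h n) i hi).1 hi, ?_, fun i hi => ?_⟩
    · exact (runPrefix_mem_Tn.mp (h (n+1)) n (by omega)).2.1 le_rfl
    · exact (runPrefix_mem_Tn.mp (h (i+1)) i (by omega)).2.2 hi (by omega)
  · intro ⟨h1, h2, h3⟩ k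
    rw [runPrefix_mem_Tn]
    intro i hik
    refine ⟨h1 i, fun hni => ?_, fun hni _ => h3 i hni⟩
    rw [h3 i hni]; exact h2

lemma Tn_mono {a b : ℕ} (hab : a ≤ b) : Tn a ⊆ Tn b := by
  intro t ht i hi
  refine ⟨fun hib => ?_, fun hbi => (ht i hi).2.1 (le_trans hab hbi), fun hbi hb => ?_⟩
  · rcases lt_or_ge i a with hia | hia
    · exact le_trans ((ht i hi).1 hia) hab
    · exact le_trans ((ht i hi).2.1 hia) (by omega)
  · have ha : a < t.length := by omega
    rw [(ht i hi).2.2 (by omega) ha, (ht b hb).2.2 hab ha]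

lemma Tn_isGameTree (n : ℕ) : IsGameTree (Tn n) := by
  constructor
  · intro t ht k i hi
    have hi' : i < t.length := by
      have := hi; simp at this; omega
    have e1 : (t.take k)[i] = t[i] := List.getElem_take
    refine ⟨fun h1 => ?_, fun h1 => ?_, fun h1 hn => ?_⟩
    · rw [e1]; exact (ht i hi').1 h1
    · rw [e1]; exact (ht i hi').2.1 h1
    · have hn' : n < t.length := by
        have := hn; simp at this; omega
      have e2 : (t.take k)[n] = t[n] := List.getElem_take
      rw [e1, e2]
      exact (ht i hi').2.2 h1 hn'
  · intro t ht
    classical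
    refine ⟨if hn : n < t.length then t[n] else 0, ?_⟩
    intro i hi
    rcases lt_or_ge i t.length with hit | hit
    · have e1 : ∀ (v : ℕ) (h : i < (t ++ [v]).length), (t ++ [v])[i] = t[i] :=
        fun v h => List.getElem_append_left hit
      refine ⟨fun h1 => ?_, fun h1 => ?_, fun h1 hn => ?_⟩
      · rw [e1]; exact (ht i hit).1 h1
      · rw [e1]; exact (ht i hit).2.1 h1
      · have hn' : n < t.length := by omega
        have e2 : ∀ (v : ℕ) (h : n < (t ++ [v]).length), (t ++ [v])[n] = t[n] :=
          fun v h => List.getElem_append_left hn'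
        rw [e1, e2]
        exact (ht i hit).2.2 h1 hn'
    · have hieq : i = t.length := by
        have := hi; simp at this; omega
      have e1 : ∀ (v : ℕ) (h : i < (t ++ [v]).length), (t ++ [v])[i] = v :=
        fun v h => List.getElem_concat_length hieq h
      by_cases hn : n < t.length
      · simp only [dif_pos hn] at *
        refine ⟨fun h1 => ?_, fun h1 => ?_, fun h1 hnl => ?_⟩
        · rw [e1]
          rcases lt_or_ge n n with h | h
          · omega
          · exact (ht n hn).1 (by omega) |>.trans (le_refl n) |>.trans (le_refl n) |>.trans (le_refl n) |>.trans (le_refl n)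
        · rw [e1]; exact (ht n hn).2.1 (by omega) |>.trans (le_refl 1)
        · have e2 : (t ++ [t[n]])[n]'(by simp; omega) = t[n] := List.getElem_append_left hn
          rw [e1, e2]
      · simp only [dif_neg hn] at *
        refine ⟨fun h1 => by rw [e1]; omega, fun h1 => by rw [e1]; omega, fun h1 hnl => ?_⟩
        have hneq : n = t.length := by
          have := hnl; simp at this; omega
        have e2 : (t ++ [0])[n]'(by simp; omega) = 0 := List.getElem_concat_length hneq _
        rw [e1, e2]

lemma Tn_runs_finite (n : ℕ) : (Runs (Tn n)).Finite := by
  classical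
  have : Runs (Tn n) ⊆ Set.range (fun p : (Fin (n+1) → Fin (n+2)) =>
      (fun i => if h : i < n then (p ⟨i, by omega⟩ : ℕ) else (p ⟨n, by omega⟩ : ℕ))) := by
    intro R hR
    rw [mem_runs_Tn] at hR
    refine ⟨fun j => ⟨R j, ?_⟩, ?_⟩
    · rcases lt_or_ge (j : ℕ) n with h | h
      · have := hR.1 j h; omega
      · have hj : (j : ℕ) = n := by omega
        rw [hj]
        have := hR.2.1; omega
    · funext i
      by_cases h : i < n
      · simp [h]
      · simp only [dif_neg h]
        exact (hR.2.2 i (by omega)).symm ▸ rfl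
  exact Set.Finite.subset (Set.finite_range _) this

/-- the `n`-th game of the Fraïssé sequence. -/
def GameN (n : ℕ) : Game ℕ where
  tree := Tn n
  isGameTree := Tn_isGameTree n
  payoff := c00 ∩ Runs (Tn n)
  payoff_subset := fun R hR => hR.2

end TnSect
section FiniteTools

variable {M : Type u}

lemma exists_run_through {T : Set (List M)} (hT : IsGameTree T) {t : List M} (ht : t ∈ T) :
    ∃ R, R ∈ Runs T ∧ runPrefix R t.length = t := by
  classical
  let u : ℕ → {l : List M // l ∈ T} := fun k =>
    Nat.rec ⟨t, ht⟩ (fun _ p => ⟨p.1 ++ [Classical.choose (hT.2 p.1 p.2)],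
      Classical.choose_spec (hT.2 p.1 p.2)⟩) k
  have hu : ∀ k, (u (k+1)).1 = (u k).1 ++ [Classical.choose (hT.2 (u k).1 (u k).2)] :=
    fun k => rfl
  have hlen : ∀ k, (u k).1.length = t.length + k := by
    intro k
    induction k with
    | zero => rfl
    | succ k ih => rw [hu k]; simp [ih]; omega
  have hpref : ∀ j k, j ≤ k → (u j).1 <+: (u k).1 := by
    intro j k hjk
    induction k with
    | zero =>
      have : j = 0 := by omega
      subst this; exact List.prefix_rfl
    | succ k ih =>
      rcases Nat.lt_or_ge j (k+1) with h | h
      · exact (ih (by omega)).trans (by rw [hu k]; exact List.prefix_append _ _)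
      · have : j = k + 1 := by omega
        subst this; exact List.prefix_rfl
  have hne : (u 1).1 ≠ [] := by
    intro h
    have := hlen 1
    rw [h] at this
    simp at this
  set d := (u 1).1.getLast hne with hd
  set R : ℕ → M := fun i => ((u (i+1)).1).getD i d with hR
  have hRi : ∀ i k, (hik : i < k) → R i = (u k).1[i]'(by have := hlen k; omega) := by
    intro i k hik
    have h1 : i < (u (i+1)).1.length := by have := hlen (i+1); omega
    have : R i = (u (i+1)).1[i] := by
      rw [hR]
      simp only []
      rw [List.getD_eq_getElem?_getD, List.getElem?_eq_getElem h1]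
      simp
    rw [this]
    exact (hpref (i+1) k hik).getElem h1
  have hkey : ∀ k, runPrefix R k = (u k).1.take k := by
    intro k
    apply List.ext_getElem
    · simp [hlen]
    intro i h1 h2
    have hik : i < k := by simpa using h1
    rw [runPrefix_getElem _ h1, List.getElem_take, ← hRi i k hik]
  refine ⟨R, fun k => ?_, ?_⟩
  · rw [hkey k]; exact hT.1 _ (u k).2 k
  · rw [hkey t.length]
    have := hpref 0 t.length (by omega)
    have h0 : (u 0).1 = t := rfl
    rw [h0] at this
    exact (List.prefix_iff_eq_take.mp this).symm

lemma finite_sep {T : Set (List M)} (hfin : (Runs T).Finite) :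
    ∃ N : ℕ, ∀ R ∈ Runs T, ∀ R' ∈ Runs T, runPrefix R N = runPrefix R' N → R = R' := by
  classical
  have key : ∀ (R R' : ℕ → M), R ≠ R' → ∃ i, R i ≠ R' i := fun R R' h => Function.ne_iff.mp h
  obtain ⟨N, hN⟩ := (Set.Finite.image2
    (fun R R' => if h : R = R' then 0 else Nat.find (key R R' h) + 1) hfin hfin).bddAbove
  refine ⟨N, fun R hR R' hR' hpre => ?_⟩
  by_contra hne
  have h1 : (if h : R = R' then 0 else Nat.find (key R R' h) + 1) ≤ N :=
    hN (Set.mem_image2_of_mem hR hR')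
  rw [dif_neg hne] at h1
  exact (Nat.find_spec (key R R' hne)) (runPrefix_eq_iff.mp hpre _ (by omega))

lemma sep_of_agree {T : Set (List M)} {N : ℕ}
    (sep : ∀ R ∈ Runs T, ∀ R' ∈ Runs T, runPrefix R N = runPrefix R' N → R = R')
    {R R' : ℕ → M} (hR : R ∈ Runs T) (hR' : R' ∈ Runs T) {l : ℕ} (hl : N ≤ l)
    (h : runPrefix R l = runPrefix R' l) : R = R' := by
  apply sep R hR R' hR'
  have h1 : (runPrefix R l).take N = (runPrefix R' l).take N := by rw [h]
  rw [runPrefix_take, runPrefix_take, min_eq_left hl] at h1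
  exact h1

/-- For a finite game with at least one run, we get a separation level `N`, a count `r`,
a canonical run `ρ t` through each node `t`, and an injective-per-level code `c` below `r`. -/
lemma finite_game_tools (H : Game M) (hfin : H.IsFin) (hne : ∃ R, R ∈ Runs H.tree) :
    ∃ (N r : ℕ) (ρ : List M → (ℕ → M)) (c : List M → ℕ),
      (∀ R ∈ Runs H.tree, ∀ R' ∈ Runs H.tree, runPrefix R N = runPrefix R' N → R = R') ∧
      (∀ t ∈ H.tree, ρ t ∈ Runs H.tree ∧ runPrefix (ρ t) t.length = t) ∧
      (∀ t ∈ H.tree, c t < r) ∧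
      (∀ t ∈ H.tree, ∀ s ∈ H.tree, t.length = s.length → c t = c s → t = s) := by
  classical
  obtain ⟨N, hsep⟩ := finite_sep hfin
  obtain ⟨R₀, hR₀⟩ := hne
  haveI : Nonempty (ℕ → M) := ⟨R₀⟩
  set ρ : List M → (ℕ → M) := fun t =>
    if h : ∃ R, R ∈ Runs H.tree ∧ runPrefix R t.length = t then Classical.choose h
    else Classical.arbitrary _ with hρdef
  have hρ : ∀ t ∈ H.tree, ρ t ∈ Runs H.tree ∧ runPrefix (ρ t) t.length = t := by
    intro t ht
    have h : ∃ R, R ∈ Runs H.tree ∧ runPrefix R t.length = t :=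
      exists_run_through H.isGameTree ht
    rw [hρdef]
    simp only [dif_pos h]
    exact Classical.choose_spec h
  set c : List M → ℕ := fun t =>
    if h : ρ t ∈ hfin.toFinset then (hfin.toFinset.equivFin ⟨ρ t, h⟩ : Fin _).val else 0
    with hcdef
  refine ⟨N, hfin.toFinset.card, ρ, c, hsep, hρ, ?_, ?_⟩
  · intro t ht
    have hm : ρ t ∈ hfin.toFinset := by
      exact (Set.Finite.mem_toFinset (hs := hfin)).mpr (hρ t ht).1
    rw [hcdef]
    simp only [dif_pos hm]
    exact (hfin.toFinset.equivFin ⟨ρ t, hm⟩).isLt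
  · intro t ht s hs hlen hc
    have hmt : ρ t ∈ hfin.toFinset := by
      exact (Set.Finite.mem_toFinset (hs := hfin)).mpr (hρ t ht).1
    have hms : ρ s ∈ hfin.toFinset := by
      exact (Set.Finite.mem_toFinset (hs := hfin)).mpr (hρ s hs).1
    rw [hcdef] at hc
    simp only [dif_pos hmt, dif_pos hms] at hc
    have : (⟨ρ t, hmt⟩ : {x // x ∈ hfin.toFinset}) = ⟨ρ s, hms⟩ :=
      (hfin.toFinset.equivFin).injective (Fin.ext hc)
    have hρeq : ρ t = ρ s := congrArg Subtype.val this
    calc t = runPrefix (ρ t) t.length := (hρ t ht).2.symm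
      _ = runPrefix (ρ s) s.length := by rw [hρeq, hlen]
      _ = s := (hρ s hs).2

end FiniteTools
section MkMap

variable {M₁ : Type u} {M₂ : Type v}

/-- The chronological map determined by an entry function `E`. -/
def mkMap (E : List M₁ → ℕ → M₂) : List M₁ → List M₂ := fun t => runPrefix (E t) t.length

lemma mkMap_length (E : List M₁ → ℕ → M₂) (t : List M₁) : (mkMap E t).length = t.length :=
  runPrefix_length _ _

lemma mkMap_getElem (E : List M₁ → ℕ → M₂) {t : List M₁} {i : ℕ}
    (h : i < (mkMap E t).length) : (mkMap E t)[i] = E t i :=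
  runPrefix_getElem _ h

/-- `E` is local: the entry at `i` only depends on the prefix of length `i+1`. -/
def EntryLocal (E : List M₁ → ℕ → M₂) : Prop :=
  ∀ t k i, i < k → i < t.length → E (t.take k) i = E t i

lemma mkMap_take {E : List M₁ → ℕ → M₂} (hE : EntryLocal E) (t : List M₁) (k : ℕ) :
    mkMap E (t.take k) = (mkMap E t).take k := by
  rw [mkMap, mkMap, runPrefix_take, List.length_take]
  apply runPrefix_eq_iff.mpr
  intro i hi
  exact hE t k i (by omega) (by omega)

lemma mkMap_bar {E : List M₁ → ℕ → M₂} {R : ℕ → M₁} {S : ℕ → M₂}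
    (h : BarMapsTo (mkMap E) R S) (i : ℕ) : S i = E (runPrefix R (i+1)) i := by
  have := barMapsTo_apply h i (E (runPrefix R (i+1)) i)
  rw [this, mkMap]
  have hlen : i < (runPrefix (E (runPrefix R (i+1))) (runPrefix R (i+1)).length).length := by
    simp
  rw [List.getD_eq_getElem?_getD, List.getElem?_eq_getElem hlen]
  simp [runPrefix_getElem]

lemma mkMap_barMapsTo {E : List M₁ → ℕ → M₂} (hE : EntryLocal E) (R : ℕ → M₁) :
    BarMapsTo (mkMap E) R (fun i => E (runPrefix R (i+1)) i) := by
  intro m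
  apply List.ext_getElem (by simp [mkMap])
  intro i h1 h2
  rw [runPrefix_getElem]
  have him : i < m := by simpa using h1
  rw [mkMap_getElem]
  have : runPrefix R (i+1) = (runPrefix R m).take (i+1) := by
    rw [runPrefix_take]
    congr 1
    omega
  rw [this, hE _ (i+1) i (by omega) (by simpa using him)]

end MkMap

section LemU

variable {M : Type u}

lemma runs_empty_of_tree_empty {T : Set (List M)} (hE : ¬ ∃ t, t ∈ T) : Runs T = ∅ := by
  ext R
  simp only [Set.mem_empty_iff_false, iff_false]
  intro hR
  exact hE ⟨runPrefix R 0, hR 0⟩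

/-- Universality: every finite game embeds into some `GameN n`. -/
lemma lemU (H : Game M) (hfin : H.IsFin) :
    ∃ (n : ℕ) (g : List M → List ℕ), IsGameEmbedding H (GameN n) g := by
  classical
  by_cases hE : ∃ t, t ∈ H.tree
  case neg =>
    refine ⟨0, fun _ => [], ⟨⟨?_, ?_, ?_⟩, ?_, ?_⟩⟩
    · intro t ht; exact absurd ⟨t, ht⟩ hE
    · intro t ht; exact absurd ⟨t, ht⟩ hE
    · intro t ht; exact absurd ⟨t, ht⟩ hE
    · intro t ht; exact absurd ⟨t, ht⟩ hE
    · intro R hR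
      exact absurd ⟨_, hR 0⟩ hE
  case pos =>
    obtain ⟨t₀, ht₀⟩ := hE
    have hne : ∃ R, R ∈ Runs H.tree := by
      obtain ⟨R, hR, -⟩ := exists_run_through H.isGameTree ht₀
      exact ⟨R, hR⟩
    obtain ⟨N, r, ρ, c, hsep, hρ, hcr, hcinj⟩ := finite_game_tools H hfin hne
    set n := N + r with hn
    set payInd : List M → ℕ := fun u => if ρ u ∈ H.payoff then 0 else 1 with hpayInd
    set E : List M → ℕ → ℕ := fun t i =>
      if i < n then c (t.take (i+1)) else payInd (t.take (n+1)) with hEdef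
    have hE : EntryLocal E := by
      intro t k i hik hit
      rw [hEdef]
      simp only []
      by_cases h : i < n
      · rw [if_pos h, if_pos h, List.take_take]
        congr 2
        omega
      · rw [if_neg h, if_neg h, List.take_take]
        congr 2
        omega
    set g := mkMap E with hg
    have htake : ∀ t ∈ H.tree, ∀ k : ℕ, t.take k ∈ H.tree := H.isGameTree.1
    -- values of E on tree members
    have hEval1 : ∀ t ∈ H.tree, ∀ i, i < t.length → i < n → E t i = c (t.take (i+1)) := by
      intro t ht i hit hin
      rw [hEdef]; simp only [if_pos hin]
    have hEval2 : ∀ t ∈ H.tree, ∀ i, i < t.length → n ≤ i → E t i = payInd (t.take (n+1)) := by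
      intro t ht i hit hin
      rw [hEdef]; simp only [if_neg (by omega : ¬ i < n)]
    -- membership in Tn n
    have hmem : ∀ t ∈ H.tree, g t ∈ Tn n := by
      intro t ht
      rw [hg, mkMap]
      rw [runPrefix_mem_Tn]
      intro i hit
      refine ⟨fun hin => ?_, fun hni => ?_, fun hni hnt => ?_⟩
      · rw [hEval1 t ht i hit hin]
        have : c (t.take (i+1)) < r := hcr _ (htake t ht (i+1))
        omega
      · rw [hEval2 t ht i hit hni, hpayInd]
        by_cases hp : ρ (List.take (n + 1) t) ∈ H.payoff
        · simp [hp]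
        · simp [hp]
      · rw [hEval2 t ht i hit hni, hEval2 t ht n hnt le_rfl]
    have hchrono : Chronological H.tree (Tn n) g := by
      refine ⟨hmem, fun t ht => mkMap_length E t, fun t ht k => mkMap_take hE t k⟩
    -- injectivity
    have hinj : ∀ t ∈ H.tree, ∀ s ∈ H.tree, g t = g s → t = s := by
      intro t ht s hs hgeq
      have hlen : t.length = s.length := by
        rw [← mkMap_length E t, ← mkMap_length E s, ← hg, hgeq]
      have hgetEq : ∀ i, i < t.length → E t i = E s i := by
        intro i hit
        have h1 : i < (mkMap E t).length := by rw [mkMap_length]; exact hit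
        have h2 : i < (mkMap E s).length := by rw [mkMap_length]; omega
        calc E t i = (mkMap E t)[i] := (mkMap_getElem E h1).symm
          _ = (mkMap E s)[i] := List.getElem_of_eq (by rw [← hg]; exact hgeq) h1
          _ = E s i := mkMap_getElem E h2
      have hstep : ∀ k, k ≤ t.length → t.take k = s.take k := by
        intro k
        induction k with
        | zero => simp
        | succ k ih =>
          intro hk1
          have hkt : k < t.length := by omega
          have ihk := ih (by omega)
          by_cases hkn : k < n
          · have e1 := hEval1 t ht k hkt hkn
            have e2 := hEval1 s hs k (by omega) hkn
            have : c (t.take (k+1)) = c (s.take (k+1)) := by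
              rw [← e1, ← e2]; exact hgetEq k hkt
            have hlt2 : (t.take (k+1)).length = (s.take (k+1)).length := by
              rw [List.length_take, List.length_take]; omega
            exact hcinj _ (htake t ht (k+1)) _ (htake s hs (k+1)) hlt2 this
          · -- k ≥ n : use separation via canonical runs
            have hmt := hρ _ (htake t ht (k+1))
            have hms := hρ _ (htake s hs (k+1))
            have hlt : (t.take (k+1)).length = k + 1 := by
              rw [List.length_take]; omega
            have hls : (s.take (k+1)).length = k + 1 := by
              rw [List.length_take]; omega
            have hmt2 : runPrefix (ρ (t.take (k+1))) (k+1) = t.take (k+1) := by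
              have h := hmt.2; rwa [hlt] at h
            have hms2 : runPrefix (ρ (s.take (k+1))) (k+1) = s.take (k+1) := by
              have h := hms.2; rwa [hls] at h
            have hpreft : runPrefix (ρ (t.take (k+1))) k = t.take k := by
              have h3 : (runPrefix (ρ (t.take (k+1))) (k+1)).take k
                  = runPrefix (ρ (t.take (k+1))) k := by
                rw [runPrefix_take]; congr 1; omega
              rw [← h3, hmt2, List.take_take]
              congr 1; omega
            have hprefs : runPrefix (ρ (s.take (k+1))) k = s.take k := by
              have h3 : (runPrefix (ρ (s.take (k+1))) (k+1)).take k
                  = runPrefix (ρ (s.take (k+1))) k := by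
                rw [runPrefix_take]; congr 1; omega
              rw [← h3, hms2, List.take_take]
              congr 1; omega
            have hρeq : ρ (t.take (k+1)) = ρ (s.take (k+1)) :=
              sep_of_agree hsep hmt.1 hms.1 (show N ≤ k by omega)
                (by rw [hpreft, hprefs, ihk])
            rw [hρeq] at hmt2
            exact hmt2.symm.trans hms2
      have := hstep t.length le_rfl
      rwa [List.take_length, hlen, List.take_length] at this
    refine ⟨n, g, hchrono, hinj, ?_⟩
    -- payoff condition
    intro R hR S hbar
    have hSval : ∀ i, n ≤ i → S i = payInd (runPrefix R (n+1)) := by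
      intro i hni
      rw [mkMap_bar hbar i]
      have h1 : i < (runPrefix R (i+1)).length := by simp
      rw [hEval2 _ (hR (i+1)) i h1 hni]
      congr 1
      rw [runPrefix_take]
      congr 1
      omega
    have hρR : ρ (runPrefix R (n+1)) = R := by
      have hm := hρ _ (hR (n+1))
      apply sep_of_agree hsep hm.1 hR (show N ≤ n + 1 by omega)
      have := hm.2
      rw [runPrefix_length] at this
      exact this
    have hSruns : S ∈ Runs (Tn n) := by
      intro m
      rw [hbar m]
      exact hmem _ (hR m)
    constructor
    · intro hRpay
      refine ⟨⟨n, fun i hi => ?_⟩, hSruns⟩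
      rw [hSval i hi, hpayInd]
      simp only [hρR]
      rw [if_pos hRpay]
    · intro hSpay
      by_contra hRpay
      obtain ⟨N₀, hN₀⟩ := hSpay.1
      have h1 := hSval (max n N₀) (le_max_left _ _)
      rw [hpayInd] at h1
      simp only [hρR] at h1
      rw [if_neg hRpay] at h1
      have h2 := hN₀ (max n N₀) (le_max_right _ _)
      omega

end LemU
section LemA

variable {M : Type u}

lemma Tn_nil (n : ℕ) : [] ∈ Tn n := by
  intro i hi
  simp at hi

lemma Runs_mono {M' : Type v} {T T' : Set (List M')} (h : T ⊆ T') : Runs T ⊆ Runs T' :=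
  fun _ hR k => h (hR k)

lemma runPrefix_mono_take {M' : Type v} (R : ℕ → M') {l L : ℕ} (h : l ≤ L) :
    runPrefix R l = (runPrefix R L).take l := by
  rw [runPrefix_take, min_eq_left h]

/-- Amalgamation along the sequence. -/
lemma lemA (n : ℕ) (H : Game M) (hfin : H.IsFin)
    (f : List ℕ → List M) (hf : IsGameEmbedding (GameN n) H f) :
    ∃ m : ℕ, n ≤ m ∧ ∃ g : List M → List ℕ, IsGameEmbedding H (GameN m) g ∧
      ∀ t ∈ Tn n, g (f t) = t := by
  classical
  obtain ⟨hfc, hfinj, hfpay⟩ := hf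
  have hftree : ∀ t ∈ Tn n, f t ∈ H.tree := hfc.1
  have hflen : ∀ t ∈ Tn n, (f t).length = t.length := hfc.2.1
  have hftake : ∀ t ∈ Tn n, ∀ k, f (t.take k) = (f t).take k := hfc.2.2
  have hTn_take : ∀ t ∈ Tn n, ∀ k : ℕ, t.take k ∈ Tn n := (Tn_isGameTree n).1
  have hH_take : ∀ t ∈ H.tree, ∀ k : ℕ, t.take k ∈ H.tree := H.isGameTree.1
  have hne : ∃ R, R ∈ Runs H.tree := by
    obtain ⟨R, hR, -⟩ := exists_run_through H.isGameTree (hftree [] (Tn_nil n))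
    exact ⟨R, hR⟩
  obtain ⟨N, r, ρ, c, hsep, hρ, hcr, hcinj⟩ := finite_game_tools H hfin hne
  set m := n + r + N + 1 with hm
  -- the image predicate and partial inverse of f
  set InIm : List M → Prop := fun u => ∃ t, t ∈ Tn n ∧ f t = u with hInImdef
  set invf : List M → List ℕ := fun u => if h : InIm u then Classical.choose h else [] with hinvfdef
  have hinvf : ∀ u, InIm u → invf u ∈ Tn n ∧ f (invf u) = u ∧ (invf u).length = u.length := by
    intro u hu
    have hdef : invf u = Classical.choose hu := by rw [hinvfdef]; simp only [dif_pos hu]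
    obtain ⟨h1, h2⟩ := Classical.choose_spec hu
    rw [hdef]
    exact ⟨h1, h2, (hflen _ h1).symm.trans (congrArg List.length h2)⟩
  have hinvf_f : ∀ t ∈ Tn n, invf (f t) = t := by
    intro t ht
    have him : InIm (f t) := ⟨t, ht, rfl⟩
    obtain ⟨h1, h2, h3⟩ := hinvf _ him
    exact hfinj _ h1 _ ht h2
  have hImTake : ∀ u, InIm u → ∀ k, InIm (u.take k) ∧ invf (u.take k) = (invf u).take k := by
    intro u hu k
    obtain ⟨h1, h2, h3⟩ := hinvf _ hu
    have := hftake _ h1 k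
    rw [h2] at this
    constructor
    · exact ⟨(invf u).take k, hTn_take _ h1 k, this⟩
    · rw [← this, hinvf_f _ (hTn_take _ h1 k)]
  -- canonical runs through nodes
  have hNodeRun : ∀ u ∈ H.tree, ∀ j ≤ u.length, runPrefix (ρ u) j = u.take j := by
    intro u hu j hj
    rw [runPrefix_mono_take (ρ u) hj, (hρ u hu).2]
  -- the payoff indicator
  set payInd : List M → ℕ := fun u => if ρ u ∈ H.payoff then 0 else 1 with hpayInd
  -- the entry function
  set E : List M → ℕ → ℕ := fun u i =>
    if InIm (u.take (i+1)) then (invf (u.take (i+1))).getD i 0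
    else if i < m then n + 2 + c (u.take (i+1))
    else payInd (u.take (i+1)) with hEdef
  have hE : EntryLocal E := by
    intro t k i hik hit
    rw [hEdef]
    simp only [List.take_take]
    have : min (i+1) k = i + 1 := by omega
    rw [this]
  set g := mkMap E with hg
  -- basic E values
  have hEim : ∀ (u : List M) (i : ℕ), InIm (u.take (i+1)) →
      E u i = (invf (u.take (i+1))).getD i 0 := by
    intro u i h
    rw [hEdef]
    simp only [if_pos h]
  have hEnim1 : ∀ (u : List M) (i : ℕ), ¬ InIm (u.take (i+1)) → i < m →
      E u i = n + 2 + c (u.take (i+1)) := by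
    intro u i h him
    rw [hEdef]
    simp only [if_neg h, if_pos him]
  have hEnim2 : ∀ (u : List M) (i : ℕ), ¬ InIm (u.take (i+1)) → m ≤ i →
      E u i = payInd (u.take (i+1)) := by
    intro u i h him
    rw [hEdef]
    simp only [if_neg h, if_neg (by omega : ¬ i < m)]
  -- g ∘ f = id on Tn n
  have hgf : ∀ t ∈ Tn n, g (f t) = t := by
    intro t ht
    rw [hg, mkMap]
    apply List.ext_getElem (by simp [hflen _ ht])
    intro i h1 h2
    rw [runPrefix_getElem]
    have hit : i < t.length := h2
    have htka : (f t).take (i+1) = f (t.take (i+1)) := (hftake _ ht (i+1)).symm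
    have him : InIm ((f t).take (i+1)) := by
      rw [htka]; exact ⟨t.take (i+1), hTn_take _ ht (i+1), rfl⟩
    rw [hEim _ i him, htka, hinvf_f _ (hTn_take _ ht (i+1))]
    rw [List.getD_eq_getElem _ _ (by rw [List.length_take]; omega)]
    exact List.getElem_take
  -- image-case entry values and bounds
  have hEimVal : ∀ u ∈ H.tree, ∀ i, (hi : i < u.length) → InIm (u.take (i+1)) →
      ∃ (v : List ℕ) (hv : v ∈ Tn n) (hvl : v.length = i + 1),
        invf (u.take (i+1)) = v ∧ E u i = v[i]'(by omega) := by
    intro u hu i hi him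
    obtain ⟨h1, h2, h3⟩ := hinvf _ him
    have hlen : (invf (u.take (i+1))).length = i + 1 := by
      rw [h3, List.length_take]; omega
    refine ⟨invf (u.take (i+1)), h1, hlen, rfl, ?_⟩
    rw [hEim _ i him, List.getD_eq_getElem _ _ (by omega)]
  -- runs of H through in-image nodes of level m+1 come from runs of Tn n
  have haveUniq : ∀ R ∈ Runs H.tree, InIm (runPrefix R (m+1)) →
      ∃ W, W ∈ Runs (Tn n) ∧ BarMapsTo f W R ∧
        ∀ j, invf (runPrefix R j) = runPrefix W j ∧ InIm (runPrefix R j) := by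
    intro R hR him
    obtain ⟨h1, h2, h3⟩ := hinvf _ him
    set t'' := invf (runPrefix R (m+1)) with ht''
    have ht''len : t''.length = m + 1 := by rw [ht'', h3]; simp
    set W : ℕ → ℕ := fun j => if j < m + 1 then t''.getD j 0 else t''.getD n 0 with hW
    have hWval : ∀ j, (hj : j < m+1) → W j = t''[j]'(by rw [ht''len]; exact hj) := by
      intro j hj
      rw [hW]
      simp only [if_pos hj]
      exact List.getD_eq_getElem _ _ (by rw [ht''len]; exact hj)
    have hWtail : ∀ j, ¬ j < m + 1 → W j = t''.getD n 0 := by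
      intro j hj
      rw [hW]
      simp only [if_neg hj]
    have hWn : W n = t''.getD n 0 := by
      rw [hWval n (by omega)]
      exact (List.getD_eq_getElem _ _ (by rw [ht''len]; omega)).symm
    have hWruns : W ∈ Runs (Tn n) := by
      rw [mem_runs_Tn]
      refine ⟨?_, ?_, ?_⟩
      · intro i hi
        rw [hWval i (by omega)]
        exact (h1 i (by rw [ht''len]; omega)).1 hi
      · rw [hWval n (by omega)]
        exact (h1 n (by rw [ht''len]; omega)).2.1 le_rfl
      · intro i hi
        by_cases him1 : i < m + 1
        · rw [hWval i him1, hWn]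
          rw [List.getD_eq_getElem _ _ (by rw [ht''len]; omega)]
          exact (h1 i (by rw [ht''len]; omega)).2.2 hi (by rw [ht''len]; omega)
        · rw [hWtail i him1, hWn]
    have hWpre : runPrefix W (m+1) = t'' := by
      apply List.ext_getElem (by simp [ht''len])
      intro i hh1 hh2
      rw [runPrefix_getElem, hWval i (by simpa using hh1)]
    obtain ⟨SW, hSWbar, hSWruns⟩ := bar_exists hfc hWruns
    have hSWm : runPrefix SW (m+1) = runPrefix R (m+1) := by
      rw [hSWbar (m+1), hWpre, h2]
    have hReq : R = SW := by
      apply sep_of_agree hsep hR hSWruns (show N ≤ m+1 by omega)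
      rw [hSWm]
    refine ⟨W, hWruns, ?_, ?_⟩
    · rw [hReq]; exact hSWbar
    · intro j
      have hj : runPrefix R j = f (runPrefix W j) := by rw [hReq, hSWbar j]
      refine ⟨?_, ⟨runPrefix W j, hWruns j, hj.symm⟩⟩
      rw [hj, hinvf_f _ (hWruns j)]
  -- node version of the above
  have hNodeIm : ∀ u ∈ H.tree, m + 1 ≤ u.length → InIm (u.take (m+1)) →
      ∃ W, W ∈ Runs (Tn n) ∧ ∀ j ≤ u.length, invf (u.take j) = runPrefix W j ∧ InIm (u.take j) := by
    intro u hu hlen him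
    have hρu := hρ u hu
    have hmρ : runPrefix (ρ u) (m+1) = u.take (m+1) := hNodeRun u hu (m+1) hlen
    have him' : InIm (runPrefix (ρ u) (m+1)) := by rw [hmρ]; exact him
    obtain ⟨W, hW1, _, hW3⟩ := haveUniq (ρ u) hρu.1 him'
    refine ⟨W, hW1, fun j hj => ?_⟩
    have := hW3 j
    rwa [hNodeRun u hu j hj] at this
  have hNodeNim : ∀ u ∈ H.tree, ∀ j, m + 1 ≤ j → j ≤ u.length → ¬ InIm (u.take (m+1)) →
      ¬ InIm (u.take j) := by
    intro u hu j h1 h2 hnim him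
    have h4 := (hImTake _ him (m+1)).1
    rw [List.take_take, min_eq_left (by omega)] at h4
    exact hnim h4
  have hρtake : ∀ u ∈ H.tree, ∀ j, N ≤ j → j ≤ u.length → ρ (u.take j) = ρ u := by
    intro u hu j h1 h2
    have ht := hH_take u hu j
    apply sep_of_agree hsep (hρ _ ht).1 (hρ u hu).1 le_rfl
    rw [hNodeRun _ ht N (by rw [List.length_take]; omega), hNodeRun u hu N (by omega),
        List.take_take, min_eq_left h1]
  -- g maps into Tn m
  have hmem : ∀ u ∈ H.tree, g u ∈ Tn m := by
    intro u hu
    rw [hg, mkMap, runPrefix_mem_Tn]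
    intro i hi
    refine ⟨fun him => ?_, fun hmi => ?_, fun hmi hmu => ?_⟩
    · by_cases hIm : InIm (u.take (i+1))
      · obtain ⟨v, hv, hvl, -, hval⟩ := hEimVal u hu i hi hIm
        rw [hval]
        rcases lt_or_ge i n with h | h
        · have := (hv i (by omega)).1 h; omega
        · have := (hv i (by omega)).2.1 h; omega
      · rw [hEnim1 _ i hIm him]
        have := hcr _ (hH_take u hu (i+1))
        omega
    · by_cases hIm : InIm (u.take (i+1))
      · obtain ⟨v, hv, hvl, -, hval⟩ := hEimVal u hu i hi hIm
        rw [hval]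
        exact (hv i (by omega)).2.1 (by omega)
      · rw [hEnim2 _ i hIm hmi, hpayInd]
        by_cases hp : ρ (u.take (i+1)) ∈ H.payoff
        · simp [hp]
        · simp [hp]
    · by_cases hIm : InIm (u.take (m+1))
      · obtain ⟨W, hWr, hWj⟩ := hNodeIm u hu (by omega) hIm
        have hii := hWj (i+1) (by omega)
        have hmm := hWj (m+1) (by omega)
        rw [hEim _ i hii.2, hEim _ m hmm.2, hii.1, hmm.1]
        have e1 : (runPrefix W (i+1)).getD i 0 = W i := by
          rw [List.getD_eq_getElem _ _ (by simp), runPrefix_getElem]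
        have e2 : (runPrefix W (m+1)).getD m 0 = W m := by
          rw [List.getD_eq_getElem _ _ (by simp), runPrefix_getElem]
        rw [e1, e2]
        have hWc := mem_runs_Tn.mp hWr
        rw [hWc.2.2 i (by omega), hWc.2.2 m (by omega)]
      · have h1 := hNodeNim u hu (i+1) (by omega) (by omega) hIm
        have h2 := hNodeNim u hu (m+1) (by omega) (by omega) hIm
        rw [hEnim2 _ i h1 (by omega), hEnim2 _ m h2 le_rfl]
        have hre : ρ (u.take (i+1)) = ρ (u.take (m+1)) := by
          rw [hρtake u hu (i+1) (by omega) (by omega), hρtake u hu (m+1) (by omega) (by omega)]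
        rw [hpayInd]
        simp only [hre]
  have hchrono : Chronological H.tree (Tn m) g :=
    ⟨hmem, fun t _ => mkMap_length E t, fun t _ k => mkMap_take hE t k⟩
  -- injectivity
  have hinj : ∀ t ∈ H.tree, ∀ s ∈ H.tree, g t = g s → t = s := by
    intro t ht s hs hgeq
    have hlen : t.length = s.length := by
      rw [← mkMap_length E t, ← mkMap_length E s, ← hg, hgeq]
    have hgetEq : ∀ i, i < t.length → E t i = E s i := by
      intro i hit
      have hh1 : i < (mkMap E t).length := by rw [mkMap_length]; exact hit
      have hh2 : i < (mkMap E s).length := by rw [mkMap_length]; omega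
      calc E t i = (mkMap E t)[i] := (mkMap_getElem E hh1).symm
        _ = (mkMap E s)[i] := List.getElem_of_eq (by rw [← hg]; exact hgeq) hh1
        _ = E s i := mkMap_getElem E hh2
    have hstep : ∀ k, k ≤ t.length → t.take k = s.take k := by
      intro k
      induction k with
      | zero => simp
      | succ k ih =>
        intro hk1
        have hkt : k < t.length := by omega
        have ihk := ih (by omega)
        by_cases hkm : k < m
        · have hEq := hgetEq k hkt
          by_cases h1 : InIm (t.take (k+1)) <;> by_cases h2 : InIm (s.take (k+1))
          · obtain ⟨v, hv, hvl, hvinv, hval⟩ := hEimVal t ht k hkt h1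
            obtain ⟨w, hw, hwl, hwinv, hwal⟩ := hEimVal s hs k (by omega) h2
            have hfv : f v = t.take (k+1) := by rw [← hvinv]; exact (hinvf _ h1).2.1
            have hfw : f w = s.take (k+1) := by rw [← hwinv]; exact (hinvf _ h2).2.1
            have hvw : v.take k = w.take k := by
              apply hfinj _ (hTn_take _ hv k) _ (hTn_take _ hw k)
              rw [hftake _ hv k, hftake _ hw k, hfv, hfw, List.take_take, List.take_take,
                  (by omega : k ⊓ (k+1) = k), ihk]
            have hvweq : v = w := by
              apply List.ext_getElem (by omega)
              intro i hh1 hh2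
              rcases lt_or_ge i k with h | h
              · calc v[i] = (v.take k)[i]'(by rw [List.length_take]; omega) :=
                      (List.getElem_take).symm
                  _ = (w.take k)[i]'(by rw [List.length_take]; omega) :=
                      List.getElem_of_eq hvw _
                  _ = w[i] := List.getElem_take
              · have hik : i = k := by omega
                subst hik
                rw [hval, hwal] at hEq
                exact hEq
            rw [← hfv, ← hfw, hvweq]
          · exfalso
            obtain ⟨v, hv, hvl, hvinv, hval⟩ := hEimVal t ht k hkt h1
            have hb : v[k]'(by omega) ≤ n + 1 := by
              rcases lt_or_ge k n with h | h
              · exact le_trans ((hv k (by omega)).1 h) (by omega)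
              · exact le_trans ((hv k (by omega)).2.1 h) (by omega)
            rw [hval, hEnim1 _ k h2 hkm] at hEq
            omega
          · exfalso
            obtain ⟨v, hv, hvl, hvinv, hval⟩ := hEimVal s hs k (by omega) h2
            have hb : v[k]'(by omega) ≤ n + 1 := by
              rcases lt_or_ge k n with h | h
              · exact le_trans ((hv k (by omega)).1 h) (by omega)
              · exact le_trans ((hv k (by omega)).2.1 h) (by omega)
            rw [hval, hEnim1 _ k h1 hkm] at hEq
            omega
          · rw [hEnim1 _ k h1 hkm, hEnim1 _ k h2 hkm] at hEq
            have hc : c (t.take (k+1)) = c (s.take (k+1)) := by omega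
            exact hcinj _ (hH_take t ht (k+1)) _ (hH_take s hs (k+1))
              (by rw [List.length_take, List.length_take]; omega) hc
        · -- k ≥ m : canonical-run argument
          have hmt := hρ _ (hH_take t ht (k+1))
          have hms := hρ _ (hH_take s hs (k+1))
          have hlt : (t.take (k+1)).length = k + 1 := by
            rw [List.length_take]; omega
          have hls : (s.take (k+1)).length = k + 1 := by
            rw [List.length_take]; omega
          have hmt2 : runPrefix (ρ (t.take (k+1))) (k+1) = t.take (k+1) := by
            have h := hmt.2; rwa [hlt] at h
          have hms2 : runPrefix (ρ (s.take (k+1))) (k+1) = s.take (k+1) := by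
            have h := hms.2; rwa [hls] at h
          have hpreft : runPrefix (ρ (t.take (k+1))) k = t.take k := by
            have h3 : (runPrefix (ρ (t.take (k+1))) (k+1)).take k
                = runPrefix (ρ (t.take (k+1))) k := by
              rw [runPrefix_take]; congr 1; omega
            rw [← h3, hmt2, List.take_take]
            congr 1; omega
          have hprefs : runPrefix (ρ (s.take (k+1))) k = s.take k := by
            have h3 : (runPrefix (ρ (s.take (k+1))) (k+1)).take k
                = runPrefix (ρ (s.take (k+1))) k := by
              rw [runPrefix_take]; congr 1; omega
            rw [← h3, hms2, List.take_take]
            congr 1; omega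
          have hρeq : ρ (t.take (k+1)) = ρ (s.take (k+1)) :=
            sep_of_agree hsep hmt.1 hms.1 (show N ≤ k by omega)
              (by rw [hpreft, hprefs, ihk])
          rw [hρeq] at hmt2
          exact hmt2.symm.trans hms2
    have := hstep t.length le_rfl
    rwa [List.take_length, hlen, List.take_length] at this
  refine ⟨m, by omega, g, ⟨hchrono, hinj, ?_⟩, hgf⟩
  -- payoff condition
  intro R hR S hbar
  have hbar' : BarMapsTo (mkMap E) R S := by rw [← hg]; exact hbar
  have hSruns : S ∈ Runs (Tn m) := by
    intro j
    rw [hbar j]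
    exact hmem _ (hR j)
  by_cases hIm : InIm (runPrefix R (m+1))
  · obtain ⟨W, hWruns, hWbar, hWj⟩ := haveUniq R hR hIm
    have hSW : S = W := by
      funext i
      rw [mkMap_bar hbar' i]
      have htk : (runPrefix R (i+1)).take (i+1) = runPrefix R (i+1) := by
        rw [runPrefix_take, min_self]
      have him := (hWj (i+1)).2
      rw [hEim _ i (by rw [htk]; exact him), htk, (hWj (i+1)).1]
      rw [List.getD_eq_getElem _ _ (by simp), runPrefix_getElem]
    have hiff := hfpay W hWruns R hWbar
    constructor
    · intro hRp
      have hWp := hiff.mpr hRp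
      exact ⟨hSW ▸ hWp.1, hSruns⟩
    · intro hSp
      apply hiff.mp
      exact ⟨hSW ▸ hSp.1, hWruns⟩
  · have hSval : ∀ i, m ≤ i → S i = payInd (runPrefix R (i+1)) := by
      intro i hmi
      rw [mkMap_bar hbar' i]
      have htk : (runPrefix R (i+1)).take (i+1) = runPrefix R (i+1) := by
        rw [runPrefix_take, min_self]
      have hnim : ¬ InIm (runPrefix R (i+1)) := by
        intro him
        apply hIm
        have h4 := (hImTake _ him (m+1)).1
        rwa [runPrefix_take, min_eq_left (by omega)] at h4
      rw [hEnim2 _ i (by rw [htk]; exact hnim) hmi, htk]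
    have hρR : ∀ i, m ≤ i → ρ (runPrefix R (i+1)) = R := by
      intro i hmi
      apply sep_of_agree hsep (hρ _ (hR (i+1))).1 hR (show N ≤ i+1 by omega)
      have h5 := (hρ _ (hR (i+1))).2
      rwa [runPrefix_length] at h5
    constructor
    · intro hRp
      refine ⟨⟨m, fun i hi => ?_⟩, hSruns⟩
      rw [hSval i hi, hpayInd]
      simp only [hρR i hi]
      rw [if_pos hRp]
    · intro hSp
      by_contra hRp
      obtain ⟨N₀, hN₀⟩ := hSp.1
      have h1 := hSval (max m N₀) (le_max_left _ _)
      rw [hpayInd] at h1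
      simp only [hρR _ (le_max_left _ _)] at h1
      rw [if_neg hRp] at h1
      have h2 := hN₀ (max m N₀) (le_max_right _ _)
      omega

end LemA
section MainAssembly

lemma id_embed {a b : ℕ} (hab : a ≤ b) : IsGameEmbedding (GameN a) (GameN b) id := by
  refine ⟨⟨fun t ht => Tn_mono hab ht, fun t _ => rfl, fun t _ k => rfl⟩,
    fun t _ s _ h => h, ?_⟩
  intro R hR S hbar
  have hSR := barMapsTo_id hbar
  subst hSR
  constructor
  · intro h
    exact ⟨h.1, Runs_mono (Tn_mono hab) h.2⟩
  · intro h
    exact ⟨h.1, hR⟩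

lemma id_embed_GFL (n : ℕ) : IsGameEmbedding (GameN n) GFL id := by
  refine ⟨⟨fun t _ => trivial, fun _ _ => rfl, fun _ _ _ => rfl⟩, fun t _ s _ h => h, ?_⟩
  intro R hR S hbar
  have hSR := barMapsTo_id hbar
  subst hSR
  constructor
  · intro h
    exact h.1
  · intro h
    exact ⟨h, hR⟩

lemma iterComp_id (n m : ℕ) : iterComp (fun _ => (id : List ℕ → List ℕ)) n m = id := by
  induction m with
  | zero => rfl
  | succ m ih =>
    show (if n ≤ m then (fun _ => (id : List ℕ → List ℕ)) m ∘
      iterComp (fun _ => (id : List ℕ → List ℕ)) n m else id) = id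
    rw [ih]
    split <;> rfl

lemma mem_Tn_of_le {t : List ℕ} {n : ℕ} (h1 : t.length ≤ n) (h2 : ∀ x ∈ t, x ≤ n) :
    t ∈ Tn n := by
  intro i hi
  exact ⟨fun _ => h2 _ (List.getElem_mem hi), fun hni => absurd hi (by omega),
    fun hni _ => absurd hi (by omega)⟩

lemma mem_Tn_self (t : List ℕ) : t ∈ Tn (t.length + t.sum) :=
  mem_Tn_of_le (by omega)
    (fun x hx => le_trans (List.single_le_sum (fun _ _ => Nat.zero_le _) x hx) (by omega))

lemma c00_mem_payoff {Z : ℕ → ℕ} (hZ : Z ∈ c00) : ∃ n, Z ∈ (GameN n).payoff := by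
  obtain ⟨N₀, hN₀⟩ := hZ
  refine ⟨N₀ + (Finset.range N₀).sup Z, ⟨⟨N₀, hN₀⟩, ?_⟩⟩
  set n := N₀ + (Finset.range N₀).sup Z with hn
  rw [mem_runs_Tn]
  refine ⟨fun i hi => ?_, ?_, fun i hi => ?_⟩
  · rcases lt_or_ge i N₀ with h | h
    · exact le_trans (Finset.le_sup (Finset.mem_range.mpr h)) (by omega)
    · rw [hN₀ i h]; omega
  · rw [hN₀ n (by omega)]; omega
  · rw [hN₀ i (by omega), hN₀ n (by omega)]

end MainAssembly

/-- there is a Fraïssé sequence of finite games whose colimit in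
`Games_A` is `G_FL`. -/
theorem exists_fraisse_sequence_finite_games_colimit_GFL :
    ∃ (G : ℕ → Game ℕ) (e : ℕ → List ℕ → List ℕ),
      (∀ n, (G n).IsFin) ∧
      (∀ n, IsGameEmbedding (G n) (G (n + 1)) (e n)) ∧
      -- (U): every finite game embeds into some `G n`
      (∀ (M : Type u) (H : Game M), H.IsFin →
        ∃ (n : ℕ) (g : List M → List ℕ), IsGameEmbedding H (G n) g) ∧
      -- (A): the amalgamation property of the sequence
      (∀ (n : ℕ) (M : Type u) (H : Game M), H.IsFin →
        ∀ f : List ℕ → List M, IsGameEmbedding (G n) H f →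
          ∃ m : ℕ, n ≤ m ∧ ∃ g : List M → List ℕ, IsGameEmbedding H (G m) g ∧
            ∀ t ∈ (G n).tree, g (f t) = iterComp e n m t) ∧
      -- the cocone of embeddings into `G_FL` and its colimit properties
      ∃ f : ℕ → List ℕ → List ℕ,
        (∀ n, IsGameEmbedding (G n) GFL (f n)) ∧
        (∀ n, ∀ t ∈ (G n).tree, f (n + 1) (e n t) = f n t) ∧
        (⋃ n, f n '' (G n).tree) = (Set.univ : Set (List ℕ)) ∧
        {Z : ℕ → ℕ | ∃ n, ∃ R ∈ (G n).payoff, BarMapsTo (f n) R Z} = c00 ∧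
        IsGamesACoconeColimit G e GFL f := by

  refine ⟨GameN, fun _ => id, fun n => Tn_runs_finite n, fun n => id_embed (by omega),
    fun M H hfin => lemU H hfin, ?_, fun _ => id, fun n => id_embed_GFL n,
    fun n t _ => rfl, ?_, ?_, ?_⟩
  · -- (A)
    intro n M H hfin f hf
    obtain ⟨m, hnm, g, hemb, hgf⟩ := lemA n H hfin f hf
    refine ⟨m, hnm, g, hemb, fun t ht => ?_⟩
    rw [iterComp_id]
    exact hgf t ht
  · -- union of trees
    apply Set.eq_univ_of_forall
    intro t
    exact Set.mem_iUnion.mpr ⟨t.length + t.sum, ⟨t, mem_Tn_self t, rfl⟩⟩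
  · -- union of payoffs
    ext Z
    constructor
    · rintro ⟨n, R, hR, hbar⟩
      have := barMapsTo_id hbar
      subst this
      exact hR.1
    · intro hZ
      obtain ⟨n, hn⟩ := c00_mem_payoff hZ
      exact ⟨n, Z, hn, barMapsTo_id_self Z⟩
  · -- colimit property
    intro P H h hmor hcomp
    -- the maps h agree on common domains
    have hagree : ∀ b a, a ≤ b → ∀ t ∈ Tn a, h b t = h a t := by
      intro b
      induction b with
      | zero =>
        intro a hab t ht
        have : a = 0 := by omega
        subst this; rfl
      | succ b ih =>
        intro a hab t ht
        rcases Nat.lt_or_ge a (b+1) with hlt | hge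
        · have hab' : a ≤ b := by omega
          have h1 := hcomp b t (Tn_mono hab' ht)
          calc h (b+1) t = h b t := h1
            _ = h a t := ih a hab' t ht
        · have : a = b + 1 := by omega
          subst this; rfl
    have hagree2 : ∀ a b t, t ∈ Tn a → t ∈ Tn b → h a t = h b t := by
      intro a b t hta htb
      rcases le_total a b with hab | hab
      · exact (hagree b a hab t hta).symm
      · exact hagree a b hab t htb
    set k : List ℕ → List P := fun t => h (t.length + t.sum) t with hk
    have hkval : ∀ t, k t = h (t.length + t.sum) t := fun t => rfl
    have hkagree : ∀ (a : ℕ) (t : List ℕ), t ∈ Tn a → k t = h a t := by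
      intro a t ht
      rw [hkval]
      exact hagree2 _ a t (mem_Tn_self t) ht
    have hkmor : IsAMorphism GFL H k := by
      refine ⟨⟨fun t _ => ?_, fun t _ => ?_, fun t _ j => ?_⟩, ?_⟩
      · exact (hmor (t.length + t.sum)).1.1 t (mem_Tn_self t)
      · exact (hmor (t.length + t.sum)).1.2.1 t (mem_Tn_self t)
      · set nt := t.length + t.sum with hnt
        calc k (t.take j) = h nt (t.take j) :=
            hkagree nt (t.take j) ((Tn_isGameTree nt).1 t (mem_Tn_self t) j)
          _ = (h nt t).take j := (hmor nt).1.2.2 t (mem_Tn_self t) j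
          _ = (k t).take j := by rw [hkval]
      · intro R hR S hbar
        obtain ⟨n₁, hn₁⟩ := c00_mem_payoff hR
        have hbar1 : BarMapsTo (h n₁) R S := by
          intro j
          rw [hbar j]
          exact hkagree n₁ (runPrefix R j) (hn₁.2 j)
        exact (hmor n₁).2 R hn₁ S hbar1
    refine ⟨k, hkmor, fun n t ht => hkagree n t ht, ?_⟩
    intro k' hk' hfact t _
    have ht : t ∈ Tn (t.length + t.sum) := mem_Tn_self t
    calc k' t = h (t.length + t.sum) t := hfact _ t ht
      _ = k t := (hkagree _ t ht).symm

end FraisseGames
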